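/- Let (X,d) be a dissimilarity space with a compatible order q₁ < q₂ < ... < q_n, let M be an mmodule of (X,d), let i = min{k : q_k ∈ M} and j = max{k : q_k ∈ M}. Then the total order <' obtained from < by reversing the order of the elements q_i, q_{i+1}, ..., q_j (i.e., q₁ <' ... <' q_{i-1} <' q_j <' q_{j-1} <' ... <' q_i <' q_{j+1} <' ... <' q_n) is also a compatible order of (X,d). -/

import Mathlib

def IsMmodule {X : Type*} (d : X → X → ℝ) (M : Set X) : Prop :=
  ∀ z ∉ M, ∀ x ∈ M, ∀ y ∈ M, d z x = d z y

/-- A (strict total) order `lt` is compatible with `d` when `x < y < z` implies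
`d(x,z) ≥ max (d(x,y)) (d(y,z))`. -/
def IsCompatible {X : Type*} (d : X → X → ℝ) (lt : X → X → Prop) : Prop :=
  ∀ x y z : X, lt x y → lt y z → max (d x y) (d y z) ≤ d x z

/-- The segment spanned by `M` with respect to `lt`: all points lying between the
minimum element `q_i` and the maximum element `q_j` of `M` (inclusive). -/
def spanSeg {X : Type*} (lt : X → X → Prop) (M : Set X) : Set X :=
  {x : X | ∃ a ∈ M, ∃ b ∈ M, ¬ lt x a ∧ ¬ lt b x}

/-- The order obtained from `lt` by reversing the order of the elements of the
segment `q_i, q_{i+1}, …, q_j` spanned by `M`, and keeping `lt` elsewhere. -/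
def revOrder {X : Type*} (lt : X → X → Prop) (M : Set X) : X → X → Prop :=
  fun x y =>
    (x ∈ spanSeg lt M ∧ y ∈ spanSeg lt M ∧ lt y x) ∨
    (¬ (x ∈ spanSeg lt M ∧ y ∈ spanSeg lt M) ∧ lt x y)

section Aux

variable {X : Type*} {d : X → X → ℝ} {lt : X → X → Prop} {M : Set X}

lemma mem_spanSeg (hirr : ∀ a : X, ¬ lt a a) {x : X} (hx : x ∈ M) : x ∈ spanSeg lt M :=
  ⟨x, hx, x, hx, hirr x, hirr x⟩

lemma spanSeg_sep (hsto : IsStrictTotalOrder X lt) (hMne : M.Nonempty)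
    {y : X} (hy : y ∉ spanSeg lt M) :
    (∀ s ∈ spanSeg lt M, lt y s) ∨ (∀ s ∈ spanSeg lt M, lt s y) := by
  obtain ⟨m, hm⟩ := id hMne
  have hmS : m ∈ spanSeg lt M := mem_spanSeg hsto.irrefl hm
  have hasym : ∀ a b : X, lt a b → ¬ lt b a := fun a b h h' =>
    hsto.irrefl a (hsto.trans _ _ _ h h')
  rcases (haveI := hsto; trichotomous_of lt y m) with h | h | h
  · left
    rintro s ⟨a, ha, b, hb, hsa, hbs⟩
    rcases (haveI := hsto; trichotomous_of lt y s) with h' | rfl | h'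
    · exact h'
    · exact absurd ⟨a, ha, b, hb, hsa, hbs⟩ hy
    · exact absurd ⟨a, ha, m, hm, fun hya => hsa (hsto.trans _ _ _ h' hya),
        hasym _ _ h⟩ hy
  · subst h; exact absurd hmS hy
  · right
    rintro s ⟨a, ha, b, hb, hsa, hbs⟩
    rcases (haveI := hsto; trichotomous_of lt s y) with h' | rfl | h'
    · exact h'
    · exact absurd ⟨a, ha, b, hb, hsa, hbs⟩ hy
    · exact absurd ⟨m, hm, b, hb, hasym _ _ h,
        fun hby => hbs (hsto.trans _ _ _ hby h')⟩ hy

lemma d_const_above (hsto : IsStrictTotalOrder X lt)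
    (hsymm : ∀ x y : X, d x y = d y x)
    (hcomp : IsCompatible d lt)
    (hM : IsMmodule d M) {z : X} (hzM : z ∉ M)
    (hz : ∀ s ∈ spanSeg lt M, lt s z) :
    ∀ u ∈ spanSeg lt M, ∀ m ∈ M, d u z = d m z := by
  rintro u ⟨a, ha, b, hb, hua, hbu⟩ m hm
  have hirr := hsto.irrefl
  have hab : d a z = d b z := by
    have := hM z hzM a ha b hb
    rw [hsymm a z, hsymm b z]; exact this
  have ham : d a z = d m z := by
    have := hM z hzM a ha m hm
    rw [hsymm a z, hsymm m z]; exact this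
  have hbS : b ∈ spanSeg lt M := mem_spanSeg hirr hb
  have h1 : d u z ≤ d a z := by
    rcases (haveI := hsto; trichotomous_of lt a u) with h | rfl | h
    · exact le_trans (le_max_right _ _)
        (hcomp a u z h (hz u ⟨a, ha, b, hb, hua, hbu⟩))
    · exact le_refl _
    · exact absurd h hua
  have h2 : d b z ≤ d u z := by
    rcases (haveI := hsto; trichotomous_of lt u b) with h | rfl | h
    · exact le_trans (le_max_right _ _) (hcomp u b z h (hz b hbS))
    · exact le_refl _
    · exact absurd h hbu
  linarith

lemma d_const_below (hsto : IsStrictTotalOrder X lt)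
    (hcomp : IsCompatible d lt)
    (hM : IsMmodule d M) {z : X} (hzM : z ∉ M)
    (hz : ∀ s ∈ spanSeg lt M, lt z s) :
    ∀ u ∈ spanSeg lt M, ∀ m ∈ M, d z u = d z m := by
  rintro u ⟨a, ha, b, hb, hua, hbu⟩ m hm
  have hirr := hsto.irrefl
  have hab : d z a = d z b := hM z hzM a ha b hb
  have hbm : d z b = d z m := hM z hzM b hb m hm
  have haS : a ∈ spanSeg lt M := mem_spanSeg hirr ha
  have h1 : d z u ≤ d z b := by
    rcases (haveI := hsto; trichotomous_of lt u b) with h | rfl | h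
    · exact le_trans (le_max_left _ _)
        (hcomp z u b (hz u ⟨a, ha, b, hb, hua, hbu⟩) h)
    · exact le_refl _
    · exact absurd h hbu
  have h2 : d z a ≤ d z u := by
    rcases (haveI := hsto; trichotomous_of lt a u) with h | rfl | h
    · exact le_trans (le_max_left _ _) (hcomp z a u (hz a haS) h)
    · exact le_refl _
    · exact absurd h hua
  linarith

end Aux

/-- given a compatible order of `(X,d)` and an mmodule `M`, reversing
the block of elements between the minimum and the maximum of `M` yields again a
compatible (total) order of `(X,d)`. -/
theorem reverse_mmodule_block_compatible {X : Type*} [Fintype X] (d : X → X → ℝ)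
    (hsymm : ∀ x y : X, d x y = d y x)
    (hnonneg : ∀ x y : X, 0 ≤ d x y)
    (hself : ∀ x : X, d x x = 0)
    (lt : X → X → Prop) (hsto : IsStrictTotalOrder X lt)
    (hcomp : IsCompatible d lt)
    (M : Set X) (hM : IsMmodule d M) (hMne : M.Nonempty) :
    IsStrictTotalOrder X (revOrder lt M) ∧ IsCompatible d (revOrder lt M) := by
  have hirr := hsto.irrefl
  have htr := hsto.trans
  have htri : ∀ a b, lt a b ∨ a = b ∨ lt b a := (haveI := hsto; trichotomous_of lt)
  have hasym : ∀ a b : X, lt a b → ¬ lt b a := fun a b h h' =>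
    hirr a (htr _ _ _ h h')
  constructor
  · refine { trichotomous := ?_, irrefl := ?_, trans := ?_ }
    · refine fun a b h1 h2 => (?_ : revOrder lt M a b ∨ a = b ∨ revOrder lt M b a).elim
        (fun h => absurd h h1) (fun h => h.elim id (fun h => absurd h h2))
      rcases htri a b with h | h | h
      · by_cases hab : a ∈ spanSeg lt M ∧ b ∈ spanSeg lt M
        · exact Or.inr (Or.inr (Or.inl ⟨hab.2, hab.1, h⟩))
        · exact Or.inl (Or.inr ⟨hab, h⟩)
      · exact Or.inr (Or.inl h)
      · by_cases hab : a ∈ spanSeg lt M ∧ b ∈ spanSeg lt M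
        · exact Or.inl (Or.inl ⟨hab.1, hab.2, h⟩)
        · exact Or.inr (Or.inr (Or.inr ⟨fun h' => hab ⟨h'.2, h'.1⟩, h⟩))
    · intro a h
      rcases h with ⟨_, _, h⟩ | ⟨_, h⟩ <;> exact hirr a h
    · intro a b c hab hbc
      rcases hab with ⟨haS, hbS, hba⟩ | ⟨hn1, hab⟩
      · rcases hbc with ⟨_, hcS, hcb⟩ | ⟨hn2, hbc⟩
        · exact Or.inl ⟨haS, hcS, htr _ _ _ hcb hba⟩
        · have hcS : c ∉ spanSeg lt M := fun h => hn2 ⟨hbS, h⟩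
          rcases spanSeg_sep hsto hMne hcS with h | h
          · exact absurd hbc (hasym _ _ (h b hbS))
          · exact Or.inr ⟨fun h' => hcS h'.2, h a haS⟩
      · rcases hbc with ⟨hbS, hcS, hcb⟩ | ⟨hn2, hbc⟩
        · have haS : a ∉ spanSeg lt M := fun h => hn1 ⟨h, hbS⟩
          rcases spanSeg_sep hsto hMne haS with h | h
          · exact Or.inr ⟨fun h' => haS h'.1, h c hcS⟩
          · exact absurd hab (hasym _ _ (h b hbS))
        · refine Or.inr ⟨?_, htr _ _ _ hab hbc⟩
          rintro ⟨haS, hcS⟩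
          by_cases hbS : b ∈ spanSeg lt M
          · exact hn1 ⟨haS, hbS⟩
          · rcases spanSeg_sep hsto hMne hbS with h | h
            · exact hasym _ _ hab (h a haS)
            · exact hasym _ _ hbc (h c hcS)
  · intro x y z hxy hyz
    obtain ⟨m, hm⟩ := id hMne
    rcases hxy with ⟨hxS, hyS, hyx⟩ | ⟨hn1, hxy⟩
    · rcases hyz with ⟨_, hzS, hzy⟩ | ⟨hn2, hyz⟩
      · have := hcomp z y x hzy hyx
        rw [hsymm x y, hsymm y z, hsymm x z, max_comm]
        exact this
      · have hzS : z ∉ spanSeg lt M := fun h => hn2 ⟨hyS, h⟩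
        have hzM : z ∉ M := fun h => hzS (mem_spanSeg hirr h)
        rcases spanSeg_sep hsto hMne hzS with h | h
        · exact absurd hyz (hasym _ _ (h y hyS))
        · have hconst := d_const_above hsto hsymm hcomp hM hzM h
          have e1 : d y z = d x z := by
            rw [hconst y hyS m hm, hconst x hxS m hm]
          have hxz : lt x z := h x hxS
          have key := hcomp y x z hyx hxz
          refine max_le ?_ (le_of_eq e1)
          rw [hsymm x y, ← e1]
          exact le_trans (le_max_left _ _) key
    · rcases hyz with ⟨hyS, hzS, hzy⟩ | ⟨hn2, hyz⟩
      · have hxS : x ∉ spanSeg lt M := fun h => hn1 ⟨h, hyS⟩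
        have hxM : x ∉ M := fun h => hxS (mem_spanSeg hirr h)
        rcases spanSeg_sep hsto hMne hxS with h | h
        · have hconst := d_const_below hsto hcomp hM hxM h
          have e1 : d x y = d x z := by
            rw [hconst y hyS m hm, hconst z hzS m hm]
          have hxz : lt x z := h z hzS
          have key := hcomp x z y hxz hzy
          refine max_le (le_of_eq e1) ?_
          rw [hsymm y z, ← e1]
          exact le_trans (le_max_right _ _) key
        · exact absurd (h y hyS) (hasym _ _ hxy)
      · exact hcomp x y z hxy hyz
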